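/- For any graph G and any l ≥ 0 the graph μ_l(G) × K₂ is isomorphic to the graph H obtained from G × P_{2l+2} by adding two new vertices x and y, with x adjacent exactly to V(G) × {1} and y adjacent exactly to V(G) × {2l+2}. -/

import Mathlib

/-- The categorical (tensor) product of two simple graphs. -/
def tensorG {V W : Type} (G : SimpleGraph V) (H : SimpleGraph W) : SimpleGraph (V × W) where
  Adj a b := G.Adj a.1 b.1 ∧ H.Adj a.2 b.2
  symm := ⟨fun _ _ h => ⟨h.1.symm, h.2.symm⟩⟩
  loopless := ⟨fun a h => G.loopless.irrefl a.1 h.1⟩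

/-- The complete graph on two vertices. -/
def K2 : SimpleGraph (Fin 2) := SimpleGraph.completeGraph (Fin 2)

/-- The generalized Mycielskian `μ_l(G)`.  The vertex `none` is the apex `w`; the layer
`V × {i}` of the paper corresponds to the vertices `some (v, i-1)`, the top layer
(the copy of `G`) being `some (v, l)`. -/
def myc {V : Type} (l : ℕ) (G : SimpleGraph V) : SimpleGraph (Option (V × Fin (l+1))) where
  Adj a b :=
    match a, b with
    | some p, some q => G.Adj p.1 q.1 ∧
        ((p.2.val + 1 = q.2.val ∨ q.2.val + 1 = p.2.val) ∨ (p.2.val = q.2.val ∧ p.2.val = l))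
    | some p, none => p.2.val = 0
    | none, some q => q.2.val = 0
    | none, none => False
  symm := by
    constructor
    rintro (_|p) (_|q) h <;> simp_all
    exact ⟨h.1.symm, by omega⟩
  loopless := by
    constructor
    rintro (_|p) h
    · exact h
    · exact SimpleGraph.irrefl _ h.1

/-- The graph `H` obtained from `G × P_{2l+2}` by adding two vertices `x = Sum.inr 0` and
`y = Sum.inr 1`, with `x` adjacent exactly to the layer `V × {1}` (here index `0`) and `y`
adjacent exactly to the layer `V × {2l+2}` (here index `2l+1`).  The `inl`-part is the
tensor product of `G` with the path on `2l+2` vertices. -/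
def coverAux {V : Type} (l : ℕ) (G : SimpleGraph V) :
    SimpleGraph ((V × Fin (2*l+2)) ⊕ Fin 2) where
  Adj a b :=
    match a, b with
    | .inl p, .inl q => G.Adj p.1 q.1 ∧ (p.2.val + 1 = q.2.val ∨ q.2.val + 1 = p.2.val)
    | .inl p, .inr i => (i = 0 ∧ p.2.val = 0) ∨ (i = 1 ∧ p.2.val = 2*l+1)
    | .inr i, .inl p => (i = 0 ∧ p.2.val = 0) ∨ (i = 1 ∧ p.2.val = 2*l+1)
    | .inr _, .inr _ => False
  symm := by constructor; rintro (p|i) (q|j) h <;> simp_all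
             exact ⟨h.1.symm, h.2.symm⟩
  loopless := by
    constructor
    rintro (p|i) h
    · exact SimpleGraph.irrefl _ h.1
    · exact h

def mycEquiv {V : Type} (l : ℕ) :
    (Option (V × Fin (l+1)) × Fin 2) ≃ ((V × Fin (2*l+2)) ⊕ Fin 2) where
  toFun a :=
    match a with
    | (none, e) => Sum.inr (1 - e)
    | (some (v, i), e) =>
        Sum.inl (v, if (i.val + e.val) % 2 = 0 then ⟨i.val, by omega⟩
                    else ⟨2*l+1 - i.val, by omega⟩)
  invFun b :=
    match b with
    | Sum.inr j => (none, 1 - j)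
    | Sum.inl (v, k) =>
        (some (v, if h : k.val ≤ l then ⟨k.val, by omega⟩ else ⟨2*l+1 - k.val, by omega⟩),
          ⟨k.val % 2, by omega⟩)
  left_inv := by
    rintro ⟨(_|⟨v,i⟩), e⟩
    · fin_cases e <;> rfl
    · have hi := i.isLt
      have he := e.isLt
      simp only [apply_dite Fin.val, apply_ite Fin.val, Fin.val_mk]
      split_ifs <;>
        refine Prod.ext (congrArg some (Prod.ext rfl (Fin.ext ?_))) (Fin.ext ?_) <;>
        simp only [apply_dite Fin.val, apply_ite Fin.val, Fin.val_mk] <;> omega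
  right_inv := by
    rintro ((⟨v,k⟩)|j)
    · have hk := k.isLt
      simp only [apply_dite Fin.val, apply_ite Fin.val, Fin.val_mk]
      split_ifs <;>
        refine congrArg Sum.inl (Prod.ext rfl (Fin.ext ?_)) <;>
        simp only [apply_dite Fin.val, apply_ite Fin.val, Fin.val_mk] <;> omega
    · fin_cases j <;> rfl

/-- The Kronecker double cover of the `l`-Mycielskian of `G` is isomorphic to the graph
`H` of the paper. -/
theorem stmt13 {V : Type} (l : ℕ) (G : SimpleGraph V) :
    Nonempty (tensorG (myc l G) K2 ≃g coverAux l G) := by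
  refine ⟨⟨mycEquiv l, ?_⟩⟩
  rintro ⟨(_|⟨v,i⟩), e⟩ ⟨(_|⟨u,j⟩), f⟩
  · simp [mycEquiv, tensorG, myc, coverAux, K2]
  · have hj := j.isLt
    fin_cases e <;> fin_cases f <;>
      simp only [mycEquiv, Equiv.coe_fn_mk, tensorG, myc, coverAux, K2, SimpleGraph.completeGraph,
        SimpleGraph.top_adj, apply_ite Fin.val, Fin.val_mk, ne_eq, Fin.mk.injEq] <;>
      split_ifs <;> simp [-Fin.val_eq_zero_iff] <;> omega
  · have hi := i.isLt
    fin_cases e <;> fin_cases f <;>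
      simp only [mycEquiv, Equiv.coe_fn_mk, tensorG, myc, coverAux, K2, SimpleGraph.completeGraph,
        SimpleGraph.top_adj, apply_ite Fin.val, Fin.val_mk, ne_eq, Fin.mk.injEq] <;>
      split_ifs <;> simp [-Fin.val_eq_zero_iff] <;> omega
  · have hi := i.isLt
    have hj := j.isLt
    fin_cases e <;> fin_cases f <;>
      simp only [mycEquiv, Equiv.coe_fn_mk, tensorG, myc, coverAux, K2, SimpleGraph.completeGraph,
        SimpleGraph.top_adj, apply_ite Fin.val, Fin.val_mk, ne_eq, Fin.mk.injEq] <;>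
      split_ifs <;>
      constructor <;> rintro ⟨h1, h2⟩ <;>
      first
        | exact (h2 trivial).elim
        | exact absurd h2 (by omega)
        | exact ⟨⟨h1, by omega⟩, not_false⟩
        | exact ⟨h1.1, by have := h1.2; omega⟩
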